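/- Assume f is even. For every m ≥ 1 and every integer b, the set C₁^(p^m) = ⋃_{j=1}^{m} ⋃_{i=0}^{d_j/2−1} p^(m−j)·D_((i+b) mod d_j)^(p^j) ∪ {0} ⊆ ℤ/p^mℤ has cardinality (p^m + 1)/2, and its complement C₀^(p^m) = ⋃_{j=1}^{m} ⋃_{i=d_j/2}^{d_j−1} p^(m−j)·D_((i+b) mod d_j)^(p^j) satisfies ℤ/p^mℤ = C₀^(p^m) ∪ C₁^(p^m) as a disjoint union. -/

import Mathlib

/-- The generalized cyclotomic class `D_i^(p^j)` of order `d_j = p^(j-1)·(p-1)/e`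
with respect to a primitive root `g`:
`D_i^(p^j) = { g^(d_j·t + i) mod p^j : 0 ≤ t < e }`. -/
def Dclass (p e g j i : ℕ) : Set (ZMod (p ^ j)) :=
  {x | ∃ t < e, x = (g : ZMod (p ^ j)) ^ (p ^ (j - 1) * ((p - 1) / e) * t + i)}

/-- `C₁^(p^m) = ⋃_{j=1}^{m} ⋃_{i=0}^{d_j/2-1} p^(m-j)·D_((i+b) mod d_j)^(p^j) ∪ {0}`,
where `p^(m-j)·D = { p^(m-j)·x mod p^m : x ∈ D }` (representatives `x ∈ [0, p^j)`). -/
def C1set (p e g m b : ℕ) : Set (ZMod (p ^ m)) :=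
  {0} ∪ ⋃ j ∈ Set.Icc 1 m, ⋃ i ∈ Set.Iio (p ^ (j - 1) * ((p - 1) / e) / 2),
    (fun x : ZMod (p ^ j) => (p : ZMod (p ^ m)) ^ (m - j) * (x.val : ZMod (p ^ m))) ''
      Dclass p e g j ((i + b) % (p ^ (j - 1) * ((p - 1) / e)))

/-- `C₀^(p^m) = ⋃_{j=1}^{m} ⋃_{i=d_j/2}^{d_j-1} p^(m-j)·D_((i+b) mod d_j)^(p^j)`. -/
def C0set (p e g m b : ℕ) : Set (ZMod (p ^ m)) :=
  ⋃ j ∈ Set.Icc 1 m,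
    ⋃ i ∈ Set.Ico (p ^ (j - 1) * ((p - 1) / e) / 2) (p ^ (j - 1) * ((p - 1) / e)),
    (fun x : ZMod (p ^ j) => (p : ZMod (p ^ m)) ^ (m - j) * (x.val : ZMod (p ^ m))) ''
      Dclass p e g j ((i + b) % (p ^ (j - 1) * ((p - 1) / e)))

set_option linter.unusedSectionVars false
set_option maxHeartbeats 1000000

section Order
variable {p g : ℕ}

lemma pow_eq_one_iff_int_dvd (n k : ℕ) :
    (g : ZMod n) ^ k = 1 ↔ (n : ℤ) ∣ (g : ℤ) ^ k - 1 := by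
  rw [← ZMod.intCast_zmod_eq_zero_iff_dvd]
  push_cast
  rw [sub_eq_zero]

variable (hp : p.Prime) (hodd : Odd p)
  (hg : orderOf (g : ZMod (p ^ 2)) = Nat.totient (p ^ 2))
include hp hg

lemma g_coprime : Nat.Coprime g p := by
  haveI : Fact p.Prime := ⟨hp⟩
  haveI : NeZero (p ^ 2) := ⟨pow_ne_zero _ hp.ne_zero⟩
  have htpos : 0 < Nat.totient (p ^ 2) := Nat.totient_pos.mpr (pow_pos hp.pos 2)
  have : IsUnit (g : ZMod (p ^ 2)) := by
    apply IsUnit.of_pow_eq_one (n := Nat.totient (p ^ 2))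
    · rw [← hg]; exact pow_orderOf_eq_one _
    · omega
  have := (ZMod.isUnit_iff_coprime g (p ^ 2)).mp this
  exact Nat.Coprime.coprime_dvd_right (dvd_pow_self p two_ne_zero) this

lemma p_not_dvd_g : ¬ p ∣ g := by
  intro h
  have hc : Nat.gcd g p = 1 := g_coprime hp hg
  have : p ∣ Nat.gcd g p := Nat.dvd_gcd h dvd_rfl
  rw [hc] at this
  have := Nat.le_of_dvd one_pos this
  have := hp.two_le
  omega

lemma g_not_dvd : ¬ (p : ℤ) ∣ (g : ℤ) := by
  rw [Int.natCast_dvd_natCast]; exact p_not_dvd_g hp hg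

lemma fermat_dvd : (p : ℤ) ∣ (g : ℤ) ^ (p - 1) - 1 := by
  haveI : Fact p.Prime := ⟨hp⟩
  rw [← pow_eq_one_iff_int_dvd]
  have hg0 : (g : ZMod p) ≠ 0 := by
    rw [Ne, ZMod.natCast_eq_zero_iff]
    exact p_not_dvd_g hp hg
  exact ZMod.pow_card_sub_one_eq_one hg0

lemma emult_base : emultiplicity (p : ℤ) ((g : ℤ) ^ (p - 1) - 1) = 1 := by
  have hd2 : ¬ (p : ℤ) ^ 2 ∣ (g : ℤ) ^ (p - 1) - 1 := by
    intro h
    rw [show ((p:ℤ))^2 = ((p^2 : ℕ) : ℤ) by push_cast; ring, ← pow_eq_one_iff_int_dvd] at h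
    have hdvd := orderOf_dvd_of_pow_eq_one h
    rw [hg, Nat.totient_prime_pow hp two_pos] at hdvd
    have h1 : 0 < p - 1 := by have := hp.two_le; omega
    have hle := Nat.le_of_dvd h1 hdvd
    norm_num at hle
    have h2 : 1 * (p - 1) < p * (p - 1) := Nat.mul_lt_mul_of_lt_of_le hp.one_lt le_rfl h1
    rw [one_mul] at h2
    exact absurd hle (not_le.mpr h2)
  rw [show (1 : ℕ∞) = ((1:ℕ) : ℕ∞) from rfl, emultiplicity_eq_coe]
  exact ⟨by simpa using fermat_dvd hp hg, by simpa using hd2⟩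

include hodd

lemma emult_lifted (k : ℕ) :
    emultiplicity (p : ℤ) ((g : ℤ) ^ ((p - 1) * p ^ k) - 1) = 1 + k := by
  have h := Int.emultiplicity_pow_sub_pow (x := (g:ℤ)^(p-1)) (y := 1) hp hodd
    (by simpa using fermat_dvd hp hg)
    (fun h => g_not_dvd hp hg ((Nat.prime_iff_prime_int.mp hp).dvd_of_dvd_pow h)) (p ^ k)
  rw [one_pow, ← pow_mul, emult_base hp hg, hp.emultiplicity_pow_self] at h
  exact h

end Order

section Order2
variable {p g : ℕ}
variable (hp : p.Prime) (hodd : Odd p)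
  (hg : orderOf (g : ZMod (p ^ 2)) = Nat.totient (p ^ 2))
include hp hodd hg

lemma orderOf_g_mod_p : orderOf (g : ZMod p) = p - 1 := by
  haveI : Fact p.Prime := ⟨hp⟩
  have hg0 : (g : ZMod p) ≠ 0 := by
    rw [Ne, ZMod.natCast_eq_zero_iff]; exact p_not_dvd_g hp hg
  set t1 := orderOf (g : ZMod p) with ht1
  have hdvd1 : t1 ∣ p - 1 := orderOf_dvd_of_pow_eq_one (ZMod.pow_card_sub_one_eq_one hg0)
  have hpe : (p : ℤ) ∣ (g : ℤ) ^ t1 - 1 := by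
    rw [← pow_eq_one_iff_int_dvd]; exact pow_orderOf_eq_one _
  have hx : ¬ (p:ℤ) ∣ (g:ℤ) ^ t1 := fun h =>
    g_not_dvd hp hg ((Nat.prime_iff_prime_int.mp hp).dvd_of_dvd_pow h)
  have hlte := Int.emultiplicity_pow_sub_pow (x := (g:ℤ)^t1) (y := 1) hp hodd
    (by simpa using hpe) hx p
  rw [one_pow, ← pow_mul] at hlte
  have h1le : (1:ℕ∞) ≤ emultiplicity (p:ℤ) ((g:ℤ)^t1 - 1) := by
    apply le_emultiplicity_of_pow_dvd; simpa using hpe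
  have hpp : emultiplicity p p = 1 := by
    have := hp.emultiplicity_pow_self (n := 1)
    simpa using this
  have h2le : ((2:ℕ):ℕ∞) ≤ emultiplicity (p:ℤ) ((g:ℤ)^(t1 * p) - 1) := by
    rw [hlte, hpp]
    calc ((2:ℕ):ℕ∞) = 1 + 1 := by norm_cast
    _ ≤ _ := add_le_add h1le le_rfl
  have hdvd2 : (p:ℤ)^2 ∣ (g:ℤ)^(t1 * p) - 1 := pow_dvd_of_le_emultiplicity h2le
  have hone : (g : ZMod (p^2)) ^ (t1 * p) = 1 := by
    rw [pow_eq_one_iff_int_dvd]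
    exact dvd_trans (by push_cast; exact dvd_rfl) hdvd2
  have hdvd3 := orderOf_dvd_of_pow_eq_one hone
  rw [hg, Nat.totient_prime_pow hp two_pos] at hdvd3
  norm_num at hdvd3
  -- hdvd3 : p * (p - 1) ∣ t1 * p
  have hdvd4 : (p - 1) * p ∣ t1 * p := by rwa [mul_comm (p-1) p]
  have hdvd5 : (p - 1) ∣ t1 := (Nat.mul_dvd_mul_iff_right hp.pos).mp hdvd4
  exact Nat.dvd_antisymm hdvd1 hdvd5

lemma orderOf_g_prime_pow (k : ℕ) :
    orderOf (g : ZMod (p ^ (k + 1))) = p ^ k * (p - 1) := by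
  have hcast : ((p ^ (k+1) : ℕ) : ℤ) = (p:ℤ)^(k+1) := by push_cast; ring
  have hup : (g : ZMod (p ^ (k+1))) ^ ((p - 1) * p ^ k) = 1 := by
    rw [pow_eq_one_iff_int_dvd, hcast]
    apply pow_dvd_of_le_emultiplicity
    rw [emult_lifted hp hodd hg k]
    exact le_of_eq (by push_cast; ring)
  set t := orderOf (g : ZMod (p ^ (k+1))) with ht
  have htdvd : t ∣ (p - 1) * p ^ k := orderOf_dvd_of_pow_eq_one hup
  have hmodp : (g : ZMod p) ^ t = 1 := by
    rw [pow_eq_one_iff_int_dvd]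
    refine dvd_trans ?_ ((pow_eq_one_iff_int_dvd _ _).mp (pow_orderOf_eq_one _))
    exact_mod_cast Int.natCast_dvd_natCast.mpr (dvd_pow_self p (Nat.succ_ne_zero k))
  have hp1t : (p - 1) ∣ t := by
    rw [← orderOf_g_mod_p hp hodd hg]
    exact orderOf_dvd_of_pow_eq_one hmodp
  obtain ⟨s, hs⟩ := hp1t
  have hp1pos : 0 < p - 1 := by have := hp.two_le; omega
  have hsdvd : s ∣ p ^ k := by
    have : (p-1) * s ∣ (p-1) * p ^ k := hs ▸ htdvd
    exact (mul_dvd_mul_iff_left hp1pos.ne').mp this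
  obtain ⟨a, ha, has⟩ := (Nat.dvd_prime_pow hp).mp hsdvd
  rcases eq_or_lt_of_le ha with heq | hlt
  · rw [hs, has, heq, mul_comm]
  · exfalso
    have hk1 : 1 ≤ k := by omega
    have htdvd2 : t ∣ (p - 1) * p ^ (k - 1) := by
      rw [hs, has]
      exact Nat.mul_dvd_mul_left _ (pow_dvd_pow p (by omega))
    have hone2 : (g : ZMod (p ^ (k+1))) ^ ((p - 1) * p ^ (k-1)) = 1 :=
      orderOf_dvd_iff_pow_eq_one.mp htdvd2
    rw [pow_eq_one_iff_int_dvd, hcast] at hone2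
    have := le_emultiplicity_of_pow_dvd hone2
    rw [emult_lifted hp hodd hg (k-1)] at this
    have : (k + 1 : ℕ) ≤ 1 + (k - 1 : ℕ) := by exact_mod_cast this
    omega

end Order2


lemma pow_eq_pow_iff_of_isUnit {M : Type*} [Monoid M] {x : M} (hx : IsUnit x) {a b : ℕ} :
    x ^ a = x ^ b ↔ a ≡ b [MOD orderOf x] := by
  obtain ⟨u, rfl⟩ := hx
  rw [← Units.val_pow_eq_pow_val, ← Units.val_pow_eq_pow_val, orderOf_units]
  constructor
  · intro h
    exact pow_eq_pow_iff_modEq.mp (Units.ext h)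
  · intro h
    exact congrArg Units.val (pow_eq_pow_iff_modEq.mpr h)

section Classes
variable {p e g : ℕ}
variable (hp : p.Prime) (hodd : Odd p) (he : 0 < e) (hef : e ∣ p - 1)
  (hg : orderOf (g : ZMod (p ^ 2)) = Nat.totient (p ^ 2)) (k : ℕ)

-- assume proved:
variable (horder : orderOf (g : ZMod (p ^ (k+1))) = p ^ k * (p - 1))
variable (hcop : Nat.Coprime g p)

include hp he hef

lemma g_isUnit (hcop : Nat.Coprime g p) (n : ℕ) : IsUnit (g : ZMod (p ^ n)) :=
  (ZMod.isUnit_iff_coprime g (p ^ n)).mpr (hcop.pow_right _)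

lemma fe_eq : (p - 1) / e * e = p - 1 := Nat.div_mul_cancel hef

lemma d_pos : 0 < p ^ k * ((p - 1) / e) := by
  have h2 := hp.two_le
  have : 0 < (p - 1) / e := Nat.div_pos (Nat.le_of_dvd (by omega) hef) he
  positivity

include horder

lemma orderOf_eq_de : orderOf (g : ZMod (p ^ (k+1))) = (p ^ k * ((p - 1) / e)) * e := by
  rw [horder, mul_assoc, fe_eq hp he hef]

variable (hcop : Nat.Coprime g p)

omit hp he hef horder in
lemma mem_Dclass_iff {x : ZMod (p ^ (k+1))} {i : ℕ} :
    x ∈ Dclass p e g (k+1) i ↔ ∃ t < e, x = (g : ZMod (p ^ (k+1))) ^ ((p ^ k * ((p - 1) / e)) * t + i) := by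
  simp [Dclass]

include hcop in
lemma Dclass_disjoint {i₁ i₂ : ℕ} (h₁ : i₁ < p ^ k * ((p - 1) / e))
    (h₂ : i₂ < p ^ k * ((p - 1) / e)) (hne : i₁ ≠ i₂) :
    Disjoint (Dclass p e g (k+1) i₁) (Dclass p e g (k+1) i₂) := by
  set d := p ^ k * ((p - 1) / e) with hd
  rw [Set.disjoint_left]
  rintro x hx1 hx2
  rw [mem_Dclass_iff] at hx1 hx2
  obtain ⟨t₁, ht₁, rfl⟩ := hx1
  obtain ⟨t₂, ht₂, heq⟩ := hx2
  rw [pow_eq_pow_iff_of_isUnit (g_isUnit hp he hef hcop (k+1)),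
    orderOf_eq_de hp he hef k horder] at heq
  have hmod : (d * t₁ + i₁) ≡ (d * t₂ + i₂) [MOD d] :=
    heq.of_dvd (Dvd.intro e rfl)
  have h3 : i₁ ≡ i₂ [MOD d] := by
    calc i₁ ≡ d * t₁ + i₁ [MOD d] := by
            simpa using (Nat.modEq_iff_dvd' (Nat.le_add_left _ _)).mpr ⟨t₁, Nat.add_sub_cancel _ _⟩
    _ ≡ d * t₂ + i₂ [MOD d] := hmod
    _ ≡ i₂ [MOD d] := by
            simpa using ((Nat.modEq_iff_dvd' (Nat.le_add_left _ _)).mpr ⟨t₂, Nat.add_sub_cancel _ _⟩).symm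
  rw [Nat.ModEq] at h3
  rw [Nat.mod_eq_of_lt h₁, Nat.mod_eq_of_lt h₂] at h3
  exact hne h3

include hcop in
lemma Dclass_ncard (i : ℕ) : (Dclass p e g (k+1) i).ncard = e := by
  set d := p ^ k * ((p - 1) / e) with hd
  have himg : Dclass p e g (k+1) i
      = (fun t => (g : ZMod (p ^ (k+1))) ^ (d * t + i)) '' (Set.Iio e) := by
    ext x
    rw [mem_Dclass_iff]
    simp [eq_comm]
    exact Iff.rfl
  have hinj : Set.InjOn (fun t => (g : ZMod (p ^ (k+1))) ^ (d * t + i)) (Set.Iio e) := by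
    intro t₁ ht₁ t₂ ht₂ heq
    simp only at heq
    rw [pow_eq_pow_iff_of_isUnit (g_isUnit hp he hef hcop (k+1)),
      orderOf_eq_de hp he hef k horder] at heq
    simp only [Set.mem_Iio] at ht₁ ht₂
    have h2 := (heq.add_right_cancel' i)
    have h3 : t₁ ≡ t₂ [MOD e] :=
      Nat.ModEq.mul_left_cancel' (d_pos hp he hef k).ne' h2
    rw [Nat.ModEq, Nat.mod_eq_of_lt ht₁, Nat.mod_eq_of_lt ht₂] at h3
    exact h3
  rw [himg, Set.ncard_image_of_injOn hinj, ← Finset.coe_Iio, Set.ncard_coe_finset,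
    Nat.card_Iio]

omit horder in
include hcop in
lemma Dclass_isUnit {x : ZMod (p ^ (k+1))} {i : ℕ} (hx : x ∈ Dclass p e g (k+1) i) :
    IsUnit x := by
  rw [mem_Dclass_iff] at hx
  obtain ⟨t, _, rfl⟩ := hx
  exact (g_isUnit hp he hef hcop (k+1)).pow _

include hcop in
lemma exists_pow_eq {x : ZMod (p ^ (k+1))} (hx : IsUnit x) :
    ∃ n, x = (g : ZMod (p ^ (k+1))) ^ n := by
  haveI : NeZero (p ^ (k+1)) := ⟨pow_ne_zero _ hp.ne_zero⟩
  have hordpos : 0 < orderOf (g : ZMod (p ^ (k+1))) := by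
    rw [horder]
    have := hp.two_le
    exact Nat.mul_pos (pow_pos hp.pos k) (by omega)
  set N := orderOf (g : ZMod (p ^ (k+1))) with hN
  set S : Set (ZMod (p ^ (k+1))) := Set.range (fun n : ℕ => (g : ZMod (p ^ (k+1))) ^ n) with hS
  set U : Set (ZMod (p ^ (k+1))) := {x | IsUnit x} with hU
  have hSU : S ⊆ U := by
    rintro _ ⟨n, rfl⟩
    exact (g_isUnit hp he hef hcop (k+1)).pow _
  have hUcard : U.ncard = Nat.totient (p ^ (k+1)) := by
    have hU2 : U = Set.range (fun u : (ZMod (p ^ (k+1)))ˣ => (u : ZMod (p ^ (k+1)))) := by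
      ext x
      exact ⟨fun ⟨u, hu⟩ => ⟨u, hu⟩, fun ⟨u, hu⟩ => ⟨u, hu⟩⟩
    rw [hU2, ← Set.image_univ, Set.ncard_image_of_injective _ Units.val_injective, Set.ncard_univ,
      Nat.card_eq_fintype_card, ZMod.card_units_eq_totient]
  have hScard : S.ncard = Nat.totient (p ^ (k+1)) := by
    have hS2 : S = (fun n : ℕ => (g : ZMod (p ^ (k+1))) ^ n) '' (Set.Iio N) := by
      ext x
      constructor
      · rintro ⟨n, rfl⟩
        exact ⟨n % N, Nat.mod_lt _ hordpos, pow_mod_orderOf _ _⟩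
      · rintro ⟨n, _, rfl⟩
        exact ⟨n, rfl⟩
    have hinj : Set.InjOn (fun n : ℕ => (g : ZMod (p ^ (k+1))) ^ n) (Set.Iio N) := by
      intro a ha b hb hab
      simp only [Set.mem_Iio] at ha hb
      rw [pow_eq_pow_iff_of_isUnit (g_isUnit hp he hef hcop (k+1))] at hab
      rwa [Nat.ModEq, Nat.mod_eq_of_lt ha, Nat.mod_eq_of_lt hb] at hab
    rw [hS2, Set.ncard_image_of_injOn hinj, ← Finset.coe_Iio, Set.ncard_coe_finset,
      Nat.card_Iio]
    show N = _
    rw [horder, Nat.totient_prime_pow hp (Nat.succ_pos k)]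
    norm_num
  have heq : S = U := Set.eq_of_subset_of_ncard_le hSU (by rw [hUcard, hScard]) (Set.toFinite U)
  have : x ∈ U := hx
  rw [← heq] at this
  obtain ⟨n, hn⟩ := this
  exact ⟨n, hn.symm⟩

include hcop in
lemma isUnit_mem_Dclass {x : ZMod (p ^ (k+1))} (hx : IsUnit x) :
    ∃ i < p ^ k * ((p - 1) / e), x ∈ Dclass p e g (k+1) i := by
  set d := p ^ k * ((p - 1) / e) with hd
  obtain ⟨n, rfl⟩ := exists_pow_eq hp he hef k horder hcop hx
  have hde : 0 < d * e := Nat.mul_pos (d_pos hp he hef k) he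
  set n' := n % (d * e) with hn'
  have hn'lt : n' < d * e := Nat.mod_lt _ hde
  have hxn' : (g : ZMod (p ^ (k+1))) ^ n = (g : ZMod (p ^ (k+1))) ^ n' := by
    rw [hn', ← orderOf_eq_de hp he hef k horder, pow_mod_orderOf]
  refine ⟨n' % d, Nat.mod_lt _ (d_pos hp he hef k), ?_⟩
  rw [mem_Dclass_iff]
  refine ⟨n' / d, ?_, ?_⟩
  · rw [Nat.div_lt_iff_lt_mul (d_pos hp he hef k)]
    rw [mul_comm d e] at hn'lt
    exact hn'lt
  · rw [hxn']
    conv_lhs => rw [← Nat.div_add_mod n' d]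

end Classes


section Levels
variable {p : ℕ} (hp : p.Prime) {m : ℕ}

/-- The level embedding. -/
noncomputable def Fmap (p m j : ℕ) (x : ZMod (p ^ j)) : ZMod (p ^ m) :=
  (p : ZMod (p ^ m)) ^ (m - j) * (x.val : ZMod (p ^ m))

lemma Fmap_eq_cast {j : ℕ} (x : ZMod (p ^ j)) :
    Fmap p m j x = ((p ^ (m - j) * x.val : ℕ) : ZMod (p ^ m)) := by
  unfold Fmap; push_cast; ring

include hp

lemma Fmap_nat_lt {j : ℕ} (hjm : j ≤ m) (x : ZMod (p ^ j)) :
    p ^ (m - j) * x.val < p ^ m := by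
  haveI : NeZero (p ^ j) := ⟨pow_ne_zero _ hp.ne_zero⟩
  calc p ^ (m - j) * x.val < p ^ (m - j) * p ^ j :=
        (Nat.mul_lt_mul_left (pow_pos hp.pos _)).mpr (ZMod.val_lt x)
  _ = p ^ m := by rw [← pow_add]; congr 1; omega

lemma Fmap_nat_eq {j : ℕ} (hjm : j ≤ m) (x : ZMod (p ^ j)) :
    (Fmap p m j x).val = p ^ (m - j) * x.val := by
  haveI : NeZero (p ^ m) := ⟨pow_ne_zero _ hp.ne_zero⟩
  rw [Fmap_eq_cast, ZMod.val_cast_of_lt (Fmap_nat_lt hp hjm x)]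

lemma Fmap_inj {j : ℕ} (hjm : j ≤ m) {x y : ZMod (p ^ j)} (h : Fmap p m j x = Fmap p m j y) :
    x = y := by
  haveI : NeZero (p ^ j) := ⟨pow_ne_zero _ hp.ne_zero⟩
  have hv : (Fmap p m j x).val = (Fmap p m j y).val := by rw [h]
  rw [Fmap_nat_eq hp hjm, Fmap_nat_eq hp hjm] at hv
  have := Nat.eq_of_mul_eq_mul_left (pow_pos hp.pos (m - j)) hv
  calc x = ((x.val : ℕ) : ZMod (p ^ j)) := (ZMod.natCast_rightInverse x).symm
  _ = ((y.val : ℕ) : ZMod (p ^ j)) := by rw [this]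
  _ = y := ZMod.natCast_rightInverse y

lemma unit_val_coprime {j : ℕ} (hj : 1 ≤ j) {x : ZMod (p ^ j)} (hx : IsUnit x) :
    Nat.Coprime x.val p := by
  haveI : NeZero (p ^ j) := ⟨pow_ne_zero _ hp.ne_zero⟩
  obtain ⟨u, rfl⟩ := hx
  have := ZMod.val_coe_unit_coprime u
  exact Nat.Coprime.coprime_dvd_right (dvd_pow_self p (by omega)) this

lemma unit_val_pos {j : ℕ} (hj : 1 ≤ j) {x : ZMod (p ^ j)} (hx : IsUnit x) : 0 < x.val := by
  rcases Nat.eq_zero_or_pos x.val with h0 | h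
  · exfalso
    have := unit_val_coprime hp hj hx
    rw [h0] at this
    have h1 := Nat.coprime_zero_left p |>.mp this
    exact hp.one_lt.ne' h1
  · exact h

lemma Fmap_ne_zero {j : ℕ} (hj : 1 ≤ j) (hjm : j ≤ m) {x : ZMod (p ^ j)} (hx : IsUnit x) :
    Fmap p m j x ≠ 0 := by
  haveI : NeZero (p ^ m) := ⟨pow_ne_zero _ hp.ne_zero⟩
  intro h
  have hv : (Fmap p m j x).val = 0 := by rw [h, ZMod.val_zero]
  rw [Fmap_nat_eq hp hjm] at hv
  have := unit_val_pos hp hj hx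
  have := pow_pos hp.pos (m - j)
  nlinarith

lemma Fmap_level_ne {j j' : ℕ} (hj : 1 ≤ j) (hjm : j ≤ m) (hj' : 1 ≤ j') (hjm' : j' ≤ m)
    (hne : j ≠ j') {x : ZMod (p ^ j)} {y : ZMod (p ^ j')} (hx : IsUnit x) (hy : IsUnit y) :
    Fmap p m j x ≠ Fmap p m j' y := by
  -- WLOG j < j'
  wlog hlt : j' < j generalizing j j' x y
  · have hlt' : j < j' := by omega
    exact (this hj' hjm' hj hjm (Ne.symm hne) hy hx hlt').symm
  intro h
  have hv : p ^ (m - j) * x.val = p ^ (m - j') * y.val := by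
    rw [← Fmap_nat_eq hp hjm, ← Fmap_nat_eq hp hjm', h]
  -- j' < j so m - j < m - j', and p^(m-j+1) ∣ rhs but not lhs
  have hdvd : p ^ (m - j + 1) ∣ p ^ (m - j') * y.val :=
    dvd_mul_of_dvd_left (pow_dvd_pow p (by omega)) _
  rw [← hv] at hdvd
  rw [pow_succ] at hdvd
  have hpx : p ∣ x.val := by
    apply (Nat.mul_dvd_mul_iff_left (pow_pos hp.pos (m - j))).mp
    obtain ⟨c, hc⟩ := hdvd
    exact ⟨c, by rw [hc]; try ring⟩

  have hc2 := unit_val_coprime hp hj hx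
  have : p ∣ Nat.gcd x.val p := Nat.dvd_gcd hpx dvd_rfl
  rw [hc2] at this
  have := Nat.le_of_dvd one_pos this
  have := hp.two_le
  omega

lemma Fmap_cover {c : ZMod (p ^ m)} (hm : 1 ≤ m) (hc : c ≠ 0) :
    ∃ j, 1 ≤ j ∧ j ≤ m ∧ ∃ x : ZMod (p ^ j), IsUnit x ∧ Fmap p m j x = c := by
  haveI : NeZero (p ^ m) := ⟨pow_ne_zero _ hp.ne_zero⟩
  set n := c.val with hn
  have hn0 : n ≠ 0 := fun h => hc (by
    have : c = ((n : ℕ) : ZMod (p ^ m)) := (ZMod.natCast_rightInverse c).symm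
    rw [this, h]; simp)
  have hnlt : n < p ^ m := ZMod.val_lt c
  set v := n.factorization p with hv
  have hvdvd : p ^ v ∣ n := Nat.ordProj_dvd n p
  set u := n / p ^ v with hu
  have hun : p ^ v * u = n := Nat.ordProj_mul_ordCompl_eq_self n p
  have hup : ¬ p ∣ u := Nat.not_dvd_ordCompl hp hn0
  have hvlt : v < m := by
    by_contra hge
    have : p ^ m ∣ n := dvd_trans (pow_dvd_pow p (by omega)) hvdvd
    have := Nat.le_of_dvd (Nat.pos_of_ne_zero hn0) this
    omega
  refine ⟨m - v, by omega, by omega, (u : ZMod (p ^ (m - v))), ?_, ?_⟩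
  · rw [ZMod.isUnit_iff_coprime]
    apply Nat.Coprime.pow_right
    exact (Nat.Prime.coprime_iff_not_dvd hp).mpr hup |>.symm
  · haveI : NeZero (p ^ (m - v)) := ⟨pow_ne_zero _ hp.ne_zero⟩
    have hult : u < p ^ (m - v) := by
      by_contra hge
      push_neg at hge
      have : p ^ v * p ^ (m - v) ≤ p ^ v * u := Nat.mul_le_mul_left _ hge
      rw [← pow_add] at this
      have h2 : v + (m - v) = m := by omega
      rw [h2, hun] at this
      omega
    rw [Fmap_eq_cast, ZMod.val_cast_of_lt hult]
    have h3 : m - (m - v) = v := by omega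
    rw [h3, hun]
    exact ZMod.natCast_rightInverse c

end Levels


lemma shift_exists {b c d : ℕ} (hd : 0 < d) (hc : c < d) :
    ∃ i < d, (i + b) % d = c := by
  refine ⟨(c + (d - b % d)) % d, Nat.mod_lt _ hd, ?_⟩
  have h1 : b % d < d := Nat.mod_lt _ hd
  rw [Nat.mod_add_mod, ← Nat.add_mod_mod]
  have h2 : c + (d - b % d) + b % d = c + d := by omega
  rw [h2, Nat.add_mod_right, Nat.mod_eq_of_lt hc]

lemma shift_inj {b d i₁ i₂ : ℕ} (h₁ : i₁ < d) (h₂ : i₂ < d)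
    (h : (i₁ + b) % d = (i₂ + b) % d) : i₁ = i₂ := by
  have : i₁ + b ≡ i₂ + b [MOD d] := h
  have := this.add_right_cancel' b
  rwa [Nat.ModEq, Nat.mod_eq_of_lt h₁, Nat.mod_eq_of_lt h₂] at this

lemma ncard_disj_biUnion {ι α : Type*} (s : Finset ι) (f : ι → Set α)
    (hfin : ∀ i ∈ s, (f i).Finite)
    (hdisj : ∀ i ∈ s, ∀ j ∈ s, i ≠ j → Disjoint (f i) (f j)) :
    (⋃ i ∈ s, f i).ncard = ∑ i ∈ s, (f i).ncard := by
  classical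
  induction s using Finset.induction_on with
  | empty => simp
  | @insert a s ha ih =>
    rw [Finset.set_biUnion_insert]
    have hUfin : (⋃ i ∈ s, f i).Finite :=
      Set.Finite.biUnion s.finite_toSet (fun i hi => hfin i (Finset.mem_insert_of_mem hi))
    have hd : Disjoint (f a) (⋃ i ∈ s, f i) := by
      rw [Set.disjoint_left]
      rintro x hxa hxU
      simp only [Set.mem_iUnion] at hxU
      obtain ⟨i, hi, hxi⟩ := hxU
      have hne : a ≠ i := fun h => ha (h ▸ hi)
      exact Set.disjoint_left.mp
        (hdisj a (Finset.mem_insert_self a s) i (Finset.mem_insert_of_mem hi) hne) hxa hxi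
    rw [Set.ncard_union_eq hd (hfin a (Finset.mem_insert_self a s)) hUfin,
      Finset.sum_insert ha,
      ih (fun i hi => hfin i (Finset.mem_insert_of_mem hi))
        (fun i hi j hj hij => hdisj i (Finset.mem_insert_of_mem hi) j (Finset.mem_insert_of_mem hj) hij)]

lemma geom_sum_nat (p m : ℕ) (hp : 2 ≤ p) :
    ∑ i ∈ Finset.range m, p ^ i * (p - 1) = p ^ m - 1 := by
  induction m with
  | zero => simp
  | succ n ih =>
    rw [Finset.sum_range_succ, ih]
    have h2 : p ^ n * (p - 1) = p ^ (n+1) - p ^ n := by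
      rw [Nat.mul_sub, mul_one, ← pow_succ]
    have h3 : 1 ≤ p ^ n := Nat.one_le_pow _ _ (by omega)
    have h4 : p ^ n ≤ p ^ (n+1) := Nat.pow_le_pow_right (by omega) (by omega)
    omega
section Main
variable {p e g : ℕ}

-- Wrapped class facts at arbitrary level j ≥ 1.
section Wrap
variable (hp : p.Prime) (hodd : Odd p) (he : 0 < e) (hef : e ∣ p - 1)
  (hg : orderOf (g : ZMod (p ^ 2)) = Nat.totient (p ^ 2))
include hp hodd he hef hg

lemma wDdisj {j : ℕ} (hj : 1 ≤ j) {i₁ i₂ : ℕ} (h₁ : i₁ < p ^ (j-1) * ((p-1)/e))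
    (h₂ : i₂ < p ^ (j-1) * ((p-1)/e)) (hne : i₁ ≠ i₂) :
    Disjoint (Dclass p e g j i₁) (Dclass p e g j i₂) := by
  obtain ⟨k, rfl⟩ : ∃ k, j = k + 1 := ⟨j - 1, by omega⟩
  exact Dclass_disjoint hp he hef k (orderOf_g_prime_pow hp hodd hg k)
    (g_coprime hp hg) h₁ h₂ hne

lemma wDcard {j : ℕ} (hj : 1 ≤ j) (i : ℕ) : (Dclass p e g j i).ncard = e := by
  obtain ⟨k, rfl⟩ : ∃ k, j = k + 1 := ⟨j - 1, by omega⟩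
  exact Dclass_ncard hp he hef k (orderOf_g_prime_pow hp hodd hg k) (g_coprime hp hg) i

lemma wDunit {j : ℕ} (hj : 1 ≤ j) {i : ℕ} {x : ZMod (p ^ j)} (hx : x ∈ Dclass p e g j i) :
    IsUnit x := by
  obtain ⟨k, rfl⟩ : ∃ k, j = k + 1 := ⟨j - 1, by omega⟩
  exact Dclass_isUnit hp he hef k (g_coprime hp hg) hx

lemma wDmem {j : ℕ} (hj : 1 ≤ j) {x : ZMod (p ^ j)} (hx : IsUnit x) :
    ∃ i < p ^ (j-1) * ((p-1)/e), x ∈ Dclass p e g j i := by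
  obtain ⟨k, rfl⟩ : ∃ k, j = k + 1 := ⟨j - 1, by omega⟩
  exact isUnit_mem_Dclass hp he hef k (orderOf_g_prime_pow hp hodd hg k) (g_coprime hp hg) hx

end Wrap
end Main

/-- if `f = (p-1)/e` is even, then for every `m ≥ 1` and every `b`,
`|C₁^(p^m)| = (p^m + 1)/2` and `ℤ/p^mℤ` is the disjoint union of `C₀^(p^m)` and
`C₁^(p^m)`. -/
theorem C1set_card_and_partition
    (p : ℕ) (hp : p.Prime) (hodd : Odd p)
    (e : ℕ) (he : 0 < e) (hef : e ∣ p - 1) (hfeven : Even ((p - 1) / e))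
    (g : ℕ) (hg : orderOf (g : ZMod (p ^ 2)) = Nat.totient (p ^ 2))
    (m : ℕ) (hm : 1 ≤ m) (b : ℕ) :
    (C1set p e g m b).ncard = (p ^ m + 1) / 2 ∧
    C0set p e g m b ∪ C1set p e g m b = Set.univ ∧
    Disjoint (C0set p e g m b) (C1set p e g m b) := by
  haveI : NeZero (p ^ m) := ⟨pow_ne_zero _ hp.ne_zero⟩
  have hcop : Nat.Coprime g p := g_coprime hp hg
  set d : ℕ → ℕ := fun j => p ^ (j - 1) * ((p - 1) / e) with hd
  have hdpos : ∀ j, 0 < d j := by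
    intro j
    have h2 := hp.two_le
    have : 0 < (p - 1) / e := Nat.div_pos (Nat.le_of_dvd (by omega) hef) he
    exact Nat.mul_pos (pow_pos hp.pos _) this
  -- membership characterizations
  have hmemC1 : ∀ x : ZMod (p ^ m), x ∈ C1set p e g m b ↔ x = 0 ∨
      ∃ j, (1 ≤ j ∧ j ≤ m) ∧ ∃ i, i < d j / 2 ∧
        x ∈ Fmap p m j '' Dclass p e g j ((i + b) % d j) := by
    intro x
    simp only [C1set, Set.mem_union, Set.mem_singleton_iff, Set.mem_iUnion, Set.mem_Icc,
      Set.mem_Iio, exists_prop, hd, Fmap]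
    exact Iff.rfl
  have hmemC0 : ∀ x : ZMod (p ^ m), x ∈ C0set p e g m b ↔
      ∃ j, (1 ≤ j ∧ j ≤ m) ∧ ∃ i, (d j / 2 ≤ i ∧ i < d j) ∧
        x ∈ Fmap p m j '' Dclass p e g j ((i + b) % d j) := by
    intro x
    simp only [C0set, Set.mem_iUnion, Set.mem_Icc, Set.mem_Ico, exists_prop, hd, Fmap]
    exact Iff.rfl
  -- any element of an Fmap-image of a class is nonzero
  have himg_ne : ∀ j, 1 ≤ j → j ≤ m → ∀ c, ∀ x ∈ Fmap p m j '' Dclass p e g j c, x ≠ 0 := by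
    rintro j hj hjm c x ⟨y, hy, rfl⟩
    exact Fmap_ne_zero hp hj hjm (wDunit hp hodd he hef hg hj hy)
  -- disjointness of images across distinct levels
  have himg_lvl : ∀ j j', 1 ≤ j → j ≤ m → 1 ≤ j' → j' ≤ m → j ≠ j' → ∀ c c',
      Disjoint (Fmap p m j '' Dclass p e g j c) (Fmap p m j' '' Dclass p e g j' c') := by
    rintro j j' hj hjm hj' hjm' hne c c'
    rw [Set.disjoint_left]
    rintro x ⟨y, hy, rfl⟩ ⟨y', hy', heq⟩
    exact Fmap_level_ne hp hj hjm hj' hjm' hne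
      (wDunit hp hodd he hef hg hj hy) (wDunit hp hodd he hef hg hj' hy') heq.symm
  -- disjointness of images at same level, distinct class indices
  have himg_cls : ∀ j, 1 ≤ j → j ≤ m → ∀ c c', c < d j → c' < d j → c ≠ c' →
      Disjoint (Fmap p m j '' Dclass p e g j c) (Fmap p m j '' Dclass p e g j c') := by
    rintro j hj hjm c c' hc hc' hne
    rw [Set.disjoint_left]
    rintro x ⟨y, hy, rfl⟩ ⟨y', hy', heq⟩
    have := Fmap_inj hp hjm heq.symm
    subst this
    exact Set.disjoint_left.mp (wDdisj hp hodd he hef hg hj hc hc' hne) hy hy'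
  refine ⟨?_, ?_, ?_⟩
  · -- cardinality
    have hC1eq : C1set p e g m b = {0} ∪ ⋃ j ∈ Finset.Icc 1 m, ⋃ i ∈ Finset.range (d j / 2),
        Fmap p m j '' Dclass p e g j ((i + b) % d j) := by
      ext x
      rw [hmemC1 x]
      simp only [Set.mem_union, Set.mem_singleton_iff, Set.mem_iUnion, Finset.mem_Icc,
        Finset.mem_range, exists_prop]
    rw [hC1eq]
    have hBfin : ∀ (S : Set (ZMod (p^m))), S.Finite := fun S => S.toFinite
    have hinner : ∀ j ∈ Finset.Icc 1 m,
        (⋃ i ∈ Finset.range (d j / 2), Fmap p m j '' Dclass p e g j ((i + b) % d j)).ncard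
          = (d j / 2) * e := by
      intro j hj
      rw [Finset.mem_Icc] at hj
      have hdisj : ∀ i ∈ Finset.range (d j / 2), ∀ i' ∈ Finset.range (d j / 2), i ≠ i' →
          Disjoint (Fmap p m j '' Dclass p e g j ((i + b) % d j))
            (Fmap p m j '' Dclass p e g j ((i' + b) % d j)) := by
        intro i hi i' hi' hne
        rw [Finset.mem_range] at hi hi'
        have hdhalf : d j / 2 ≤ d j := Nat.div_le_self _ _
        apply himg_cls j hj.1 hj.2 _ _ (Nat.mod_lt _ (hdpos j)) (Nat.mod_lt _ (hdpos j))
        intro h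
        exact hne (shift_inj (by omega) (by omega) h)
      rw [ncard_disj_biUnion _ _ (fun i _ => hBfin _) hdisj]
      have hconst : ∀ i ∈ Finset.range (d j / 2),
          (Fmap p m j '' Dclass p e g j ((i + b) % d j)).ncard = e := by
        intro i _
        rw [Set.ncard_image_of_injective _ (fun x y h => Fmap_inj hp hj.2 h)]
        exact wDcard hp hodd he hef hg hj.1 _
      rw [Finset.sum_congr rfl hconst, Finset.sum_const, Finset.card_range, smul_eq_mul]
    have hdz : Disjoint ({0} : Set (ZMod (p^m)))
        (⋃ j ∈ Finset.Icc 1 m, ⋃ i ∈ Finset.range (d j / 2),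
          Fmap p m j '' Dclass p e g j ((i + b) % d j)) := by
      rw [Set.disjoint_left]
      intro x hx0 hxB
      simp only [Set.mem_iUnion, Finset.mem_Icc, Finset.mem_range, exists_prop] at hxB
      obtain ⟨j, hj, i, hi, hximg⟩ := hxB
      exact himg_ne j hj.1 hj.2 _ _ hximg (Set.mem_singleton_iff.mp hx0)
    rw [Set.ncard_union_eq hdz (hBfin _) (hBfin _), Set.ncard_singleton]
    have houter : ∀ j ∈ Finset.Icc 1 m, ∀ j' ∈ Finset.Icc 1 m, j ≠ j' →
        Disjoint (⋃ i ∈ Finset.range (d j / 2), Fmap p m j '' Dclass p e g j ((i + b) % d j))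
          (⋃ i ∈ Finset.range (d j' / 2), Fmap p m j' '' Dclass p e g j' ((i + b) % d j')) := by
      intro j hj j' hj' hne
      rw [Finset.mem_Icc] at hj hj'
      rw [Set.disjoint_left]
      intro x hxB hxB'
      simp only [Set.mem_iUnion, Finset.mem_range, exists_prop] at hxB hxB'
      obtain ⟨i, hi, hximg⟩ := hxB
      obtain ⟨i', hi', hximg'⟩ := hxB'
      exact Set.disjoint_left.mp (himg_lvl j j' hj.1 hj.2 hj'.1 hj'.2 hne _ _) hximg hximg'
    rw [ncard_disj_biUnion _ _ (fun j _ => hBfin _) houter, Finset.sum_congr rfl hinner]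
    -- arithmetic
    obtain ⟨f', hf'⟩ := hfeven
    have hfe : e * ((p - 1) / e) = p - 1 := Nat.mul_div_cancel' hef
    have h2q : 2 * (f' * e) = p - 1 := by
      rw [← hfe, hf']; ring
    have hdj2 : ∀ j, d j / 2 * e = p ^ (j - 1) * (f' * e) := by
      intro j
      have hdj : d j = 2 * (p ^ (j - 1) * f') := by
        rw [hd]; simp only; rw [hf']; ring
      rw [hdj, Nat.mul_div_cancel_left _ two_pos]
      ring
    rw [Finset.sum_congr rfl (fun j _ => hdj2 j)]
    rw [← Finset.Ico_add_one_right_eq_Icc, Finset.sum_Ico_eq_sum_range]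
    simp only [Nat.add_sub_cancel, Nat.succ_sub_one]
    have hsimp : ∀ i ∈ Finset.range m, p ^ (1 + i - 1) * (f' * e) = p ^ i * (f' * e) := by
      intro i _
      congr 2
      omega
    rw [Finset.sum_congr rfl hsimp]
    have h2S : 2 * ∑ i ∈ Finset.range m, p ^ i * (f' * e) = p ^ m - 1 := by
      calc 2 * ∑ i ∈ Finset.range m, p ^ i * (f' * e)
          = ∑ i ∈ Finset.range m, p ^ i * (2 * (f' * e)) := by
            rw [Finset.mul_sum]; exact Finset.sum_congr rfl fun i _ => by ring
      _ = ∑ i ∈ Finset.range m, p ^ i * (p - 1) := by rw [h2q]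
      _ = p ^ m - 1 := geom_sum_nat p m hp.two_le
    have hpm : 1 ≤ p ^ m := Nat.one_le_pow _ _ hp.pos
    omega
  · -- union
    apply Set.eq_univ_of_forall
    intro x
    rcases eq_or_ne x 0 with rfl | hx0
    · exact Set.mem_union_right _ ((hmemC1 0).mpr (Or.inl rfl))
    obtain ⟨j, hj, hjm, y, hyu, hyx⟩ := Fmap_cover hp hm hx0
    obtain ⟨c, hc, hyc⟩ := wDmem hp hodd he hef hg hj hyu
    obtain ⟨i, hi, hib⟩ := shift_exists (hdpos j) hc
    rcases lt_or_ge i (d j / 2) with hilt | hige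
    · refine Set.mem_union_right _ ((hmemC1 x).mpr (Or.inr ⟨j, ⟨hj, hjm⟩, i, hilt, ?_⟩))
      rw [hib]
      exact ⟨y, hyc, hyx⟩
    · refine Set.mem_union_left _ ((hmemC0 x).mpr ⟨j, ⟨hj, hjm⟩, i, ⟨hige, hi⟩, ?_⟩)
      rw [hib]
      exact ⟨y, hyc, hyx⟩
  · -- disjointness
    rw [Set.disjoint_left]
    intro x hx0 hx1
    obtain ⟨j, ⟨hj, hjm⟩, i, ⟨hige, hilt⟩, hximg⟩ := (hmemC0 x).mp hx0
    rcases (hmemC1 x).mp hx1 with rfl | ⟨j', ⟨hj', hjm'⟩, i', hi'lt, hximg'⟩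
    · exact himg_ne j hj hjm _ _ hximg rfl
    rcases eq_or_ne j j' with rfl | hne
    · have hii' : i ≠ i' := by omega
      have hcne : (i + b) % d j ≠ (i' + b) % d j := fun h =>
        hii' (shift_inj hilt (by omega) h)
      exact Set.disjoint_left.mp
        (himg_cls j hj hjm _ _ (Nat.mod_lt _ (hdpos j)) (Nat.mod_lt _ (hdpos j)) hcne)
        hximg hximg'
    · exact Set.disjoint_left.mp (himg_lvl j j' hj hjm hj' hjm' hne _ _) hximg hximg'
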